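/- Consider a perturbed discrete-time stochastic control system and let k ≥ 1. Suppose there exist a barrier certificate candidate B : ℝⁿ → ℝ and constants ε ∈ [0,1] and c ≥ 0 such that: (i) B(s) ≥ 0 for all s ∈ S; (ii) B(s) ≤ ε for all s ∈ S₀; (iii) B(s) ≥ 1 for all s ∈ S_u; (iv) ∫ B(g(s,δ)) dμ(δ) − B(s) ≤ c for all s ∈ S; and (v) ∫ B(g^k(s,Δ)) dμ^⊗k(Δ) − B(s) ≤ 0 for all s ∈ S. Then for every initial state s₀ ∈ S₀, the safety probability over the infinite time horizon is bounded below: ℙ_{s₀}[ traj(s₀,ω)(t) ∉ S_u for all t ∈ ℕ ] ≥ 1 − k·B(s₀) − k(k−1)c/2. -/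

import Mathlib

open MeasureTheory

/-- Trajectory of a perturbed discrete-time control system. -/
def traj {n : ℕ} (g : (Fin n → ℝ) → (Fin n → ℝ) → (Fin n → ℝ))
    (s₀ : Fin n → ℝ) (ω : ℕ → Fin n → ℝ) : ℕ → Fin n → ℝ
  | 0 => s₀
  | t + 1 => g (traj g s₀ ω t) (ω t)

/-- The `k`-step update map `g^k`: `g⁰(s) = s` and
`g^{i+1}(s,(δ₀,…,δ_i)) = g(g^i(s,(δ₀,…,δ_{i−1})), δ_i)`. -/
def iterUpd {n : ℕ} (g : (Fin n → ℝ) → (Fin n → ℝ) → (Fin n → ℝ)) :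
    (k : ℕ) → (Fin n → ℝ) → (Fin k → (Fin n → ℝ)) → (Fin n → ℝ)
  | 0, s, _ => s
  | k + 1, s, Δ => g (iterUpd g k s (fun i => Δ i.castSucc)) (Δ (Fin.last k))

namespace KIndAux

open ENNReal

variable {n : ℕ}

section Traj

variable (g : (Fin n → ℝ) → (Fin n → ℝ) → (Fin n → ℝ))

lemma traj_congr (s : (Fin n → ℝ)) {ω ω' : ℕ → (Fin n → ℝ)} :
    ∀ t, (∀ i, i < t → ω i = ω' i) → traj g s ω t = traj g s ω' t := by
  intro t
  induction t with
  | zero => intro _; rfl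
  | succ t ih =>
    intro h
    show g (traj g s ω t) (ω t) = g (traj g s ω' t) (ω' t)
    rw [ih (fun i hi => h i (hi.trans (Nat.lt_succ_self t))), h t (Nat.lt_succ_self t)]

lemma traj_front (s : (Fin n → ℝ)) (ω : ℕ → (Fin n → ℝ)) :
    ∀ t, traj g s ω (t + 1) = traj g (g s (ω 0)) (fun i => ω (i + 1)) t := by
  intro t
  induction t with
  | zero => rfl
  | succ t ih =>
    show g (traj g s ω (t+1)) (ω (t+1)) = g (traj g (g s (ω 0)) (fun i => ω (i+1)) t) _
    rw [ih]

lemma measurable_traj (hg : Measurable (Function.uncurry g)) (t : ℕ) :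
    Measurable (fun p : (Fin n → ℝ) × (ℕ → (Fin n → ℝ)) => traj g p.1 p.2 t) := by
  induction t with
  | zero => exact measurable_fst
  | succ t ih =>
    exact hg.comp (ih.prodMk ((measurable_pi_apply t).comp measurable_snd))

lemma iterUpd_front :
    ∀ (j : ℕ) (s : (Fin n → ℝ)) (x : Fin (j+1) → (Fin n → ℝ)),
      iterUpd g (j+1) s x = iterUpd g j (g s (x 0)) (fun i => x i.succ) := by
  intro j
  induction j with
  | zero =>
    intro s x
    show g (iterUpd g 0 s _) (x (Fin.last 0)) = g s (x 0)
    rfl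
  | succ j ih =>
    intro s x
    show g (iterUpd g (j+1) s (fun i => x i.castSucc)) (x (Fin.last (j+1)))
        = g (iterUpd g j (g s (x 0)) (fun i => (x ∘ Fin.succ) i.castSucc))
            ((fun i => x i.succ) (Fin.last j))
    rw [ih s (fun i => x i.castSucc)]
    have harg : (fun i : Fin j => x i.succ.castSucc)
        = fun i : Fin j => (x ∘ Fin.succ) i.castSucc := by
      funext i; simp only [Function.comp_apply, Fin.succ_castSucc]
    have hlast : x (Fin.last (j+1)) = (fun i => x i.succ) (Fin.last j) := by
      simp only [Fin.succ_last]
    rw [show x (Fin.castSucc 0) = x 0 from rfl, harg, hlast]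

lemma measurable_iterUpd (hg : Measurable (Function.uncurry g)) :
    ∀ j : ℕ, Measurable (fun p : (Fin n → ℝ) × (Fin j → (Fin n → ℝ)) => iterUpd g j p.1 p.2) := by
  intro j
  induction j with
  | zero => exact measurable_fst
  | succ j ih =>
    show Measurable fun p : (Fin n → ℝ) × (Fin (j+1) → (Fin n → ℝ)) =>
      g (iterUpd g j p.1 (fun i => p.2 i.castSucc)) (p.2 (Fin.last j))
    have h1 : Measurable fun p : (Fin n → ℝ) × (Fin (j+1) → (Fin n → ℝ)) =>
        iterUpd g j p.1 (fun i => p.2 i.castSucc) := by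
      refine ih.comp (measurable_fst.prodMk ?_)
      exact measurable_pi_lambda _ fun i => (measurable_pi_apply _).comp measurable_snd
    exact hg.comp (h1.prodMk ((measurable_pi_apply _).comp measurable_snd))

lemma iterUpd_mem {S W : Set (Fin n → ℝ)} (hgS : ∀ s ∈ S, ∀ δ ∈ W, g s δ ∈ S) :
    ∀ (j : ℕ) (s : (Fin n → ℝ)), s ∈ S → ∀ x : Fin j → (Fin n → ℝ), (∀ i, x i ∈ W) → iterUpd g j s x ∈ S := by
  intro j
  induction j with
  | zero => intro s hs x _; exact hs
  | succ j ih =>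
    intro s hs x hx
    exact hgS _ (ih s hs _ (fun i => hx i.castSucc)) _ (hx (Fin.last j))

end Traj

section FFdef

variable (g : (Fin n → ℝ) → (Fin n → ℝ) → (Fin n → ℝ)) (μ : Measure (Fin n → ℝ)) (B : (Fin n → ℝ) → ℝ) (k r : ℕ)

/-- check function: 1 if `t` is a check time and `B s ≥ 1`. -/
noncomputable def cnd (t : ℕ) (s : (Fin n → ℝ)) : ℝ≥0∞ :=
  if t % k = r ∧ 1 ≤ B s then 1 else 0

/-- `FF rem t s` bounds the probability of hitting `{B ≥ 1}` at some check time within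
`rem` further steps, starting from state `s` at time `t`. -/
noncomputable def FF : ℕ → ℕ → (Fin n → ℝ) → ℝ≥0∞
  | 0, t, s => cnd B k r t s
  | rem+1, t, s => max (cnd B k r t s) (∫⁻ δ, FF rem (t+1) (g s δ) ∂μ)

variable {g μ B k r}

lemma cnd_le_one (t : ℕ) (s : (Fin n → ℝ)) : cnd B k r t s ≤ 1 := by
  unfold cnd; split <;> simp

lemma measurable_cnd (hB : Measurable B) (t : ℕ) : Measurable (cnd B k r t) := by
  unfold cnd
  by_cases h : t % k = r
  · simp only [h, true_and]
    exact Measurable.ite (measurableSet_le measurable_const hB) measurable_const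
      measurable_const
  · simp only [h, false_and, if_false]
    exact measurable_const

variable [IsProbabilityMeasure μ]

lemma measurable_FF (hg : Measurable (Function.uncurry g)) (hB : Measurable B) :
    ∀ rem t, Measurable (FF g μ B k r rem t) := by
  intro rem
  induction rem with
  | zero => intro t; exact measurable_cnd hB t
  | succ rem ih =>
    intro t
    refine ((measurable_cnd hB t)).max ?_
    have : Measurable fun p : (Fin n → ℝ) × (Fin n → ℝ) => FF g μ B k r rem (t+1) (g p.1 p.2) :=
      (ih (t+1)).comp hg
    exact this.lintegral_prod_right'

lemma FF_le_one : ∀ rem t s, FF g μ B k r rem t s ≤ 1 := by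
  intro rem
  induction rem with
  | zero => intro t s; exact cnd_le_one t s
  | succ rem ih =>
    intro t s
    refine max_le (cnd_le_one t s) ?_
    calc ∫⁻ δ, FF g μ B k r rem (t+1) (g s δ) ∂μ ≤ ∫⁻ _, 1 ∂μ :=
          lintegral_mono fun δ => ih (t+1) (g s δ)
      _ = 1 := by simp

lemma FF_le_succ : ∀ rem t s, FF g μ B k r rem t s ≤ FF g μ B k r (rem+1) t s := by
  intro rem
  induction rem with
  | zero => intro t s; exact le_max_left _ _
  | succ rem ih =>
    intro t s
    exact max_le (le_max_left _ _)
      (le_max_of_le_right (lintegral_mono fun δ => ih (t+1) (g s δ)))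

lemma FF_mono {a b : ℕ} (h : a ≤ b) (t : ℕ) (s : (Fin n → ℝ)) :
    FF g μ B k r a t s ≤ FF g μ B k r b t s := by
  induction b with
  | zero => simp_all
  | succ b ih =>
    rcases Nat.lt_or_ge a (b+1) with h' | h'
    · exact (ih (Nat.lt_succ_iff.mp h')).trans (FF_le_succ b t s)
    · have : a = b + 1 := le_antisymm h h'
      subst this; exact le_rfl

end FFdef

section Fubini

variable {g : (Fin n → ℝ) → (Fin n → ℝ) → (Fin n → ℝ)} {μ : Measure (Fin n → ℝ)} [IsProbabilityMeasure μ]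

lemma lintegral_iterUpd_front (hg : Measurable (Function.uncurry g))
    {G : (Fin n → ℝ) → ℝ≥0∞} (hG : Measurable G) (j : ℕ) (s : (Fin n → ℝ)) :
    ∫⁻ Δ, G (iterUpd g (j+1) s Δ) ∂(Measure.pi fun _ : Fin (j+1) => μ)
      = ∫⁻ δ, ∫⁻ Δ, G (iterUpd g j (g s δ) Δ) ∂(Measure.pi fun _ : Fin j => μ) ∂μ := by
  have hmp := measurePreserving_piFinSuccAbove (fun _ : Fin (j+1) => μ) 0
  set h : (Fin n → ℝ) × (Fin j → (Fin n → ℝ)) → ℝ≥0∞ := fun p => G (iterUpd g j (g s p.1) p.2) with hh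
  have hmeas : Measurable h := by
    refine hG.comp ((measurable_iterUpd g hg j).comp (Measurable.prodMk ?_ measurable_snd))
    exact hg.comp (measurable_const.prodMk measurable_fst)
  have key : ∀ x : Fin (j+1) → (Fin n → ℝ), h ((MeasurableEquiv.piFinSuccAbove (fun _ => (Fin n → ℝ)) 0) x)
      = G (iterUpd g (j+1) s x) := by
    intro x
    have : (MeasurableEquiv.piFinSuccAbove (fun _ : Fin (j+1) => (Fin n → ℝ)) 0) x
        = (x 0, fun i => x ((0 : Fin (j+1)).succAbove i)) := rfl
    rw [this, hh]
    simp only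
    rw [iterUpd_front g j s x]
    congr 1
  calc ∫⁻ Δ, G (iterUpd g (j+1) s Δ) ∂(Measure.pi fun _ : Fin (j+1) => μ)
      = ∫⁻ x, h ((MeasurableEquiv.piFinSuccAbove (fun _ => (Fin n → ℝ)) 0) x)
          ∂(Measure.pi fun _ : Fin (j+1) => μ) := by
        refine lintegral_congr fun x => (key x).symm
    _ = ∫⁻ p, h p ∂(μ.prod (Measure.pi fun _ : Fin j => μ)) := hmp.lintegral_comp hmeas
    _ = ∫⁻ δ, ∫⁻ Δ, h (δ, Δ) ∂(Measure.pi fun _ : Fin j => μ) ∂μ :=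
        lintegral_prod h hmeas.aemeasurable

end Fubini

section Main

variable {g : (Fin n → ℝ) → (Fin n → ℝ) → (Fin n → ℝ)} {μ : Measure (Fin n → ℝ)}
  [IsProbabilityMeasure μ] {B : (Fin n → ℝ) → ℝ} {k r : ℕ}

lemma FF_unfold (hg : Measurable (Function.uncurry g)) (hB : Measurable B) :
    ∀ (j : ℕ), ∀ a t (s : Fin n → ℝ), (∀ i, i < j → (t + i) % k = r → i = 0) →
      FF g μ B k r (a + j) t s ≤ max (cnd B k r t s)
        (∫⁻ Δ, FF g μ B k r a (t + j) (iterUpd g j s Δ) ∂(Measure.pi fun _ : Fin j => μ)) := by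
  intro j
  induction j with
  | zero =>
    intro a t s _
    have he : (fun Δ : Fin 0 → Fin n → ℝ => FF g μ B k r a (t + 0) (iterUpd g 0 s Δ))
        = fun _ => FF g μ B k r a t s := rfl
    have h1 : (∫⁻ Δ, FF g μ B k r a (t + 0) (iterUpd g 0 s Δ)
        ∂(Measure.pi fun _ : Fin 0 => μ)) = FF g μ B k r a t s := by
      rw [he, lintegral_const, measure_univ, mul_one]
    rw [h1]
    exact le_max_right _ _
  | succ j ihj =>
    intro a t s hyp
    have h1 : FF g μ B k r (a + (j+1)) t s = max (cnd B k r t s)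
        (∫⁻ δ, FF g μ B k r (a + j) (t+1) (g s δ) ∂μ) := rfl
    rcases Nat.eq_zero_or_pos j with hj | hj
    · subst hj
      rw [h1]
      refine max_le (le_max_left _ _) (le_max_of_le_right ?_)
      have h2 := lintegral_iterUpd_front (μ := μ) hg
        (G := FF g μ B k r a (t + 1)) (measurable_FF hg hB a (t+1)) 0 s
      have h3 : ∀ x : Fin n → ℝ, (∫⁻ Δ, FF g μ B k r a (t + 1) (iterUpd g 0 x Δ)
          ∂(Measure.pi fun _ : Fin 0 => μ)) = FF g μ B k r a (t+1) x := by
        intro x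
        have he : (fun Δ : Fin 0 → Fin n → ℝ => FF g μ B k r a (t + 1) (iterUpd g 0 x Δ))
            = fun _ => FF g μ B k r a (t+1) x := rfl
        rw [he, lintegral_const, measure_univ, mul_one]
      calc ∫⁻ δ, FF g μ B k r (a+0) (t+1) (g s δ) ∂μ
          = ∫⁻ δ, ∫⁻ Δ, FF g μ B k r a (t + 1) (iterUpd g 0 (g s δ) Δ)
              ∂(Measure.pi fun _ : Fin 0 => μ) ∂μ :=
            lintegral_congr fun δ => (h3 (g s δ)).symm
        _ = ∫⁻ Δ, FF g μ B k r a (t + (0+1)) (iterUpd g (0+1) s Δ)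
              ∂(Measure.pi fun _ : Fin (0+1) => μ) := h2.symm
        _ ≤ ∫⁻ Δ, FF g μ B k r a (t + (0+1)) (iterUpd g (0+1) s Δ)
              ∂(Measure.pi fun _ : Fin (0+1) => μ) := le_rfl
    · rw [h1]
      refine max_le (le_max_left _ _) (le_max_of_le_right ?_)
      have hstep : ∀ δ : Fin n → ℝ, FF g μ B k r (a+j) (t+1) (g s δ)
          ≤ ∫⁻ Δ, FF g μ B k r a (t+1+j) (iterUpd g j (g s δ) Δ)
              ∂(Measure.pi fun _ : Fin j => μ) := by
        intro δ
        have hyp' : ∀ i, i < j → (t+1+i) % k = r → i = 0 := by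
          intro i hi hmod
          exfalso
          have := hyp (i+1) (by omega) (by rw [show t+(i+1) = t+1+i by omega]; exact hmod)
          omega
        have hm := ihj a (t+1) (g s δ) hyp'
        have hcnd : cnd B k r (t+1) (g s δ) = 0 := by
          unfold cnd
          rw [if_neg]
          rintro ⟨hmod, -⟩
          have := hyp 1 (by omega) (by rw [show t+1 = t+1 from rfl]; exact hmod)
          omega
        rw [hcnd] at hm
        exact hm.trans (le_of_eq (max_eq_right zero_le))
      calc ∫⁻ δ, FF g μ B k r (a+j) (t+1) (g s δ) ∂μ
          ≤ ∫⁻ δ, ∫⁻ Δ, FF g μ B k r a (t+1+j) (iterUpd g j (g s δ) Δ)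
              ∂(Measure.pi fun _ : Fin j => μ) ∂μ := lintegral_mono hstep
        _ = ∫⁻ Δ, FF g μ B k r a (t+(j+1)) (iterUpd g (j+1) s Δ)
              ∂(Measure.pi fun _ : Fin (j+1) => μ) := by
            rw [show t+1+j = t+(j+1) by omega] at *
            exact (lintegral_iterUpd_front (μ := μ) hg (measurable_FF hg hB a (t+(j+1))) j s).symm

lemma FF_ville (hg : Measurable (Function.uncurry g)) (hB : Measurable B)
    {S : Set (Fin n → ℝ)} (hk : 0 < k)
    (hπS : ∀ s ∈ S, ∀ᵐ Δ ∂(Measure.pi fun _ : Fin k => μ), iterUpd g k s Δ ∈ S)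
    (hBk' : ∀ s ∈ S, (∫⁻ Δ, ENNReal.ofReal (B (iterUpd g k s Δ))
        ∂(Measure.pi fun _ : Fin k => μ)) ≤ ENNReal.ofReal (B s)) :
    ∀ m t (s : Fin n → ℝ), t % k = r → s ∈ S →
      FF g μ B k r (m*k) t s ≤ ENNReal.ofReal (B s) := by
  intro m
  induction m with
  | zero =>
    intro t s _ hs
    rw [Nat.zero_mul]
    show cnd B k r t s ≤ _
    unfold cnd
    split
    · next h => exact ENNReal.one_le_ofReal.mpr h.2
    · exact zero_le
  | succ m ih =>
    intro t s ht hs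
    by_cases hBs : 1 ≤ B s
    · exact (FF_le_one _ _ _).trans (ENNReal.one_le_ofReal.mpr hBs)
    · have hyp : ∀ i, i < k → (t + i) % k = r → i = 0 := by
        intro i hik hmod
        by_contra hne
        have h1 : (t + i) % k = t % k := by rw [hmod, ht]
        have h2 : t + i ≡ t + 0 [MOD k] := by
          unfold Nat.ModEq
          simpa using h1
        have h3 : i ≡ 0 [MOD k] := Nat.ModEq.add_left_cancel' t h2
        have h4 : i % k = 0 := by simpa [Nat.ModEq] using h3
        rw [Nat.mod_eq_of_lt hik] at h4
        exact hne h4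
      have hm : (m+1)*k = m*k + k := by ring
      rw [hm]
      refine (FF_unfold hg hB k (m*k) t s hyp).trans (max_le ?_ ?_)
      · unfold cnd
        rw [if_neg (fun h => hBs h.2)]
        exact zero_le
      · calc (∫⁻ Δ, FF g μ B k r (m*k) (t+k) (iterUpd g k s Δ)
              ∂(Measure.pi fun _ : Fin k => μ))
            ≤ ∫⁻ Δ, ENNReal.ofReal (B (iterUpd g k s Δ))
              ∂(Measure.pi fun _ : Fin k => μ) := by
              refine lintegral_mono_ae ((hπS s hs).mono fun Δ hΔ => ?_)
              exact ih (t+k) _ (by rw [Nat.add_mod_right]; exact ht) hΔ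
          _ ≤ ENNReal.ofReal (B s) := hBk' s hs

lemma FF_drift (hg : Measurable (Function.uncurry g)) (hB : Measurable B)
    {S : Set (Fin n → ℝ)} (hk : 0 < k) {c : ℝ}
    (hμS : ∀ s ∈ S, ∀ᵐ δ ∂μ, g s δ ∈ S)
    (hπS : ∀ s ∈ S, ∀ᵐ Δ ∂(Measure.pi fun _ : Fin k => μ), iterUpd g k s Δ ∈ S)
    (hBk' : ∀ s ∈ S, (∫⁻ Δ, ENNReal.ofReal (B (iterUpd g k s Δ))
        ∂(Measure.pi fun _ : Fin k => μ)) ≤ ENNReal.ofReal (B s))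
    (hB1' : ∀ s ∈ S, (∫⁻ δ, ENNReal.ofReal (B (g s δ)) ∂μ)
        ≤ ENNReal.ofReal (B s) + ENNReal.ofReal c) :
    ∀ d rem t (s : Fin n → ℝ), s ∈ S → (t + d) % k = r → (∀ i, i < d → (t + i) % k ≠ r) →
      FF g μ B k r rem t s ≤ ENNReal.ofReal (B s) + d * ENNReal.ofReal c := by
  intro d
  induction d with
  | zero =>
    intro rem t s hs ht _
    have h1 : FF g μ B k r rem t s ≤ FF g μ B k r (rem*k) t s :=
      FF_mono (Nat.le_mul_of_pos_right rem hk) t s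
    have h2 := FF_ville hg hB hk hπS hBk' rem t s (by simpa using ht) hs
    simpa using h1.trans h2
  | succ d ihd =>
    intro rem t s hs ht hne
    have ht0 : t % k ≠ r := by
      have := hne 0 (by omega); simpa using this
    cases rem with
    | zero =>
      show cnd B k r t s ≤ _
      unfold cnd
      rw [if_neg (fun h => ht0 h.1)]
      exact zero_le
    | succ rem =>
      show max (cnd B k r t s) (∫⁻ δ, FF g μ B k r rem (t+1) (g s δ) ∂μ) ≤ _
      refine max_le ?_ ?_
      · unfold cnd
        rw [if_neg (fun h => ht0 h.1)]
        exact zero_le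
      · have hae : ∀ᵐ δ ∂μ, FF g μ B k r rem (t+1) (g s δ)
            ≤ ENNReal.ofReal (B (g s δ)) + d * ENNReal.ofReal c := by
          refine (hμS s hs).mono fun δ hδ => ?_
          refine ihd rem (t+1) (g s δ) hδ ?_ ?_
          · rw [show t+1+d = t+(d+1) by omega]; exact ht
          · intro i hi
            rw [show t+1+i = t+(i+1) by omega]
            exact hne (i+1) (by omega)
        calc ∫⁻ δ, FF g μ B k r rem (t+1) (g s δ) ∂μ
            ≤ ∫⁻ δ, (ENNReal.ofReal (B (g s δ)) + d * ENNReal.ofReal c) ∂μ :=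
              lintegral_mono_ae hae
          _ = (∫⁻ δ, ENNReal.ofReal (B (g s δ)) ∂μ) + d * ENNReal.ofReal c := by
              rw [lintegral_add_right _ measurable_const, lintegral_const, measure_univ,
                mul_one]
          _ ≤ (ENNReal.ofReal (B s) + ENNReal.ofReal c) + d * ENNReal.ofReal c :=
              add_le_add_left (hB1' s hs) _
          _ = ENNReal.ofReal (B s) + (d+1 : ℕ) * ENNReal.ofReal c := by
              push_cast
              ring

end Main

section Event

variable {g : (Fin n → ℝ) → (Fin n → ℝ) → (Fin n → ℝ)} {μ : Measure (Fin n → ℝ)}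
  [IsProbabilityMeasure μ] {B : (Fin n → ℝ) → ℝ} {k r : ℕ}

/-- Extension of a finite noise vector to an infinite noise sequence (by zero). -/
def extN (N : ℕ) (x : Fin N → (Fin n → ℝ)) : ℕ → (Fin n → ℝ) :=
  fun t => if h : t < N then x ⟨t, h⟩ else 0

lemma measurable_extN (N : ℕ) : Measurable (extN (n := n) N) := by
  apply measurable_pi_lambda
  intro t
  by_cases h : t < N
  · simp only [extN, dif_pos h]
    exact measurable_pi_apply _
  · simp only [extN, dif_neg h]
    exact measurable_const

lemma extN_shift (N : ℕ) (x : Fin (N+1) → (Fin n → ℝ)) :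
    (fun t => extN (N+1) x (t+1)) = extN N (fun i => x i.succ) := by
  funext t
  by_cases h : t < N
  · simp only [extN, dif_pos h, dif_pos (by omega : t+1 < N+1)]
    rfl
  · simp only [extN, dif_neg h, dif_neg (by omega : ¬(t+1 < N+1))]

lemma extN_zero (N : ℕ) (x : Fin (N+1) → (Fin n → ℝ)) : extN (N+1) x 0 = x 0 := by
  simp only [extN, dif_pos (by omega : 0 < N+1)]
  congr 1

/-- Hitting event on the finite product space. -/
def Ev (g : (Fin n → ℝ) → (Fin n → ℝ) → (Fin n → ℝ)) (B : (Fin n → ℝ) → ℝ)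
    (k r N t₀ : ℕ) (s : Fin n → ℝ) : Set (Fin N → (Fin n → ℝ)) :=
  {x | ∃ u, u ≤ N ∧ (t₀ + u) % k = r ∧ 1 ≤ B (traj g s (extN N x) u)}

lemma measurableSet_Ev_pre {α : Type*} [MeasurableSpace α]
    (hg : Measurable (Function.uncurry g)) (hB : Measurable B) {N t₀ : ℕ}
    {f : α → (Fin n → ℝ)} {h : α → Fin N → (Fin n → ℝ)}
    (hf : Measurable f) (hh : Measurable h) :
    MeasurableSet {a | ∃ u, u ≤ N ∧ (t₀ + u) % k = r ∧
      1 ≤ B (traj g (f a) (extN N (h a)) u)} := by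
  have heq : {a | ∃ u, u ≤ N ∧ (t₀ + u) % k = r ∧ 1 ≤ B (traj g (f a) (extN N (h a)) u)}
      = ⋃ u : ℕ, ⋃ (_ : u ≤ N ∧ (t₀ + u) % k = r),
          {a | 1 ≤ B (traj g (f a) (extN N (h a)) u)} := by
    ext a
    simp only [Set.mem_iUnion, Set.mem_setOf_eq]
    constructor
    · rintro ⟨u, h1, h2, h3⟩; exact ⟨u, ⟨h1, h2⟩, h3⟩
    · rintro ⟨u, ⟨h1, h2⟩, h3⟩; exact ⟨u, h1, h2, h3⟩
  rw [heq]
  refine MeasurableSet.iUnion fun u => MeasurableSet.iUnion fun _ => ?_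
  have hm : Measurable fun a => traj g (f a) (extN N (h a)) u :=
    (measurable_traj g hg u).comp (hf.prodMk ((measurable_extN N).comp hh))
  exact measurableSet_le measurable_const (hB.comp hm)

lemma measurableSet_Ev (hg : Measurable (Function.uncurry g)) (hB : Measurable B)
    {N t₀ : ℕ} {s : Fin n → ℝ} : MeasurableSet (Ev g B k r N t₀ s) :=
  measurableSet_Ev_pre hg hB (f := fun _ => s) (h := id) measurable_const measurable_id

lemma Ev_measure_le (hg : Measurable (Function.uncurry g)) (hB : Measurable B) :
    ∀ N t₀ (s : Fin n → ℝ),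
      Measure.pi (fun _ : Fin N => μ) (Ev g B k r N t₀ s) ≤ FF g μ B k r N t₀ s := by
  intro N
  induction N with
  | zero =>
    intro t₀ s
    by_cases h0 : t₀ % k = r ∧ 1 ≤ B s
    · refine prob_le_one.trans ?_
      show (1 : ℝ≥0∞) ≤ cnd B k r t₀ s
      unfold cnd
      rw [if_pos h0]
    · have hEe : Ev g B k r 0 t₀ s = ∅ := by
        ext x
        simp only [Ev, Set.mem_setOf_eq, Set.mem_empty_iff_false, iff_false]
        rintro ⟨u, hu, hmod, hB1⟩
        have hu0 : u = 0 := Nat.le_zero.mp hu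
        subst hu0
        exact h0 ⟨by simpa using hmod, hB1⟩
      rw [hEe]
      simp
  | succ N ihN =>
    intro t₀ s
    by_cases h0 : t₀ % k = r ∧ 1 ≤ B s
    · refine prob_le_one.trans ?_
      refine le_max_of_le_left ?_
      unfold cnd
      rw [if_pos h0]
    · have hmp := measurePreserving_piFinSuccAbove (fun _ : Fin (N+1) => μ) 0
      set e := MeasurableEquiv.piFinSuccAbove (fun _ : Fin (N+1) => (Fin n → ℝ)) 0 with he
      set D : Set ((Fin n → ℝ) × (Fin N → Fin n → ℝ)) :=
        {p | p.2 ∈ Ev g B k r N (t₀+1) (g s p.1)} with hD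
      have hDm : MeasurableSet D :=
        measurableSet_Ev_pre hg hB (f := fun p : (Fin n → ℝ) × (Fin N → Fin n → ℝ) => g s p.1)
          (h := Prod.snd) (hg.comp (measurable_const.prodMk measurable_fst)) measurable_snd
      have hsub : Ev g B k r (N+1) t₀ s ⊆ e ⁻¹' D := by
        rintro x ⟨u, hu, hmod, hB1⟩
        cases u with
        | zero => exact absurd ⟨by simpa using hmod, hB1⟩ h0
        | succ u =>
          have htr : traj g s (extN (N+1) x) (u+1)
              = traj g (g s (x 0)) (extN N fun i => x i.succ) u := by
            rw [traj_front]
            rw [extN_zero, extN_shift]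
          refine ⟨u, by omega, ?_, ?_⟩
          · rw [show t₀+1+u = t₀+(u+1) by omega]
            exact hmod
          · show 1 ≤ B (traj g (g s ((e x).1)) (extN N ((e x).2)) u)
            have hx1 : (e x).1 = x 0 := rfl
            have hx2 : (e x).2 = fun i : Fin N => x i.succ := rfl
            rw [hx1, hx2, ← htr]
            exact hB1
      calc (Measure.pi fun _ : Fin (N+1) => μ) (Ev g B k r (N+1) t₀ s)
          ≤ (Measure.pi fun _ : Fin (N+1) => μ) (e ⁻¹' D) := measure_mono hsub
        _ = (μ.prod (Measure.pi fun _ : Fin N => μ)) D :=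
            hmp.measure_preimage hDm.nullMeasurableSet
        _ = ∫⁻ δ, (Measure.pi fun _ : Fin N => μ) (Prod.mk δ ⁻¹' D) ∂μ :=
            Measure.prod_apply hDm
        _ ≤ ∫⁻ δ, FF g μ B k r N (t₀+1) (g s δ) ∂μ := by
            refine lintegral_mono fun δ => ?_
            have hpre : Prod.mk δ ⁻¹' D = Ev g B k r N (t₀+1) (g s δ) := rfl
            rw [hpre]
            exact ihN (t₀+1) (g s δ)
        _ ≤ FF g μ B k r (N+1) t₀ s := le_max_right _ _

end Event

end KIndAux

open scoped ENNReal in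
open KIndAux in
/-- `k`-inductive lower bound on probabilistic safety over the infinite time horizon. -/
theorem k_inductive_lower_bound_infinite_horizon_safety
    {n : ℕ} (S S₀ Su W : Set (Fin n → ℝ))
    (g : (Fin n → ℝ) → (Fin n → ℝ) → (Fin n → ℝ))
    (μ : Measure (Fin n → ℝ)) [IsProbabilityMeasure μ]
    (hS : MeasurableSet S) (hS₀ : MeasurableSet S₀) (hSu : MeasurableSet Su)
    (hS₀S : S₀ ⊆ S) (hSuS : Su ⊆ S) (hdisj : S₀ ∩ Su = ∅)
    (hg : Measurable (Function.uncurry g))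
    -- `W` is the support of the noise distribution `μ`
    (hW : W = {δ | ∀ U : Set (Fin n → ℝ), IsOpen U → δ ∈ U → 0 < μ U})
    (hgS : ∀ s ∈ S, ∀ δ ∈ W, g s δ ∈ S)
    -- `P` is the countable product measure `μ^⊗ℕ` on noise sequences,
    -- characterized by its values on finite cylinders
    (P : Measure (ℕ → Fin n → ℝ)) [IsProbabilityMeasure P]
    (hP : ∀ (T : ℕ) (A : Fin T → Set (Fin n → ℝ)), (∀ i, MeasurableSet (A i)) →
      P {ω | ∀ i : Fin T, ω (i : ℕ) ∈ A i} = ∏ i, μ (A i))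
    -- the barrier certificate candidate: a bounded Borel-measurable function
    (B : (Fin n → ℝ) → ℝ) (hBmeas : Measurable B) (hBbdd : ∃ C, ∀ s, |B s| ≤ C)
    (k : ℕ) (hk : 1 ≤ k) (ε c : ℝ) (hε : ε ∈ Set.Icc (0 : ℝ) 1) (hc : 0 ≤ c)
    (hnonneg : ∀ s ∈ S, 0 ≤ B s)
    (hinit : ∀ s ∈ S₀, B s ≤ ε)
    (hunsafe : ∀ s ∈ Su, 1 ≤ B s)
    (hcmart : ∀ s ∈ S, ∫ δ, B (g s δ) ∂μ - B s ≤ c)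
    (hkmart : ∀ s ∈ S,
      (∫ Δ, B (iterUpd g k s Δ) ∂(Measure.pi fun _ : Fin k => μ)) - B s ≤ 0) :
    ∀ s₀ ∈ S₀,
      1 - k * B s₀ - k * (k - 1 : ℝ) * c / 2 ≤
        (P {ω | ∀ t : ℕ, traj g s₀ ω t ∉ Su}).toReal := by
  intro s₀ hs₀
  have hk0 : 0 < k := hk
  have hs₀S : s₀ ∈ S := hS₀S hs₀
  have hB0 : 0 ≤ B s₀ := hnonneg _ hs₀S
  obtain ⟨C, hC⟩ := hBbdd
  -- the complement of the support of μ is null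
  have hWeq : Wᶜ = ⋃₀ {U : Set (Fin n → ℝ) | IsOpen U ∧ μ U = 0} := by
    ext δ
    simp only [Set.mem_compl_iff, hW, Set.mem_setOf_eq, Set.mem_sUnion]
    constructor
    · intro h
      push_neg at h
      obtain ⟨U, hU, hδ, hμ⟩ := h
      exact ⟨U, ⟨hU, nonpos_iff_eq_zero.mp hμ⟩, hδ⟩
    · rintro ⟨U, ⟨hU, hμ⟩, hδ⟩ h
      exact absurd (h U hU hδ) (by simp [hμ])
  have hWc0 : μ Wᶜ = 0 := by
    obtain ⟨T, hTc, hTsub, hTU⟩ := TopologicalSpace.isOpen_sUnion_countable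
      {U : Set (Fin n → ℝ) | IsOpen U ∧ μ U = 0} (fun U hU => hU.1)
    rw [hWeq, ← hTU]
    exact (measure_sUnion_null_iff hTc).mpr fun U hU => (hTsub hU).2
  have hWcm : MeasurableSet (Wᶜ) := by
    have : IsOpen (Wᶜ) := hWeq ▸ isOpen_sUnion fun U hU => hU.1
    exact this.measurableSet
  have haeW : ∀ᵐ δ ∂μ, δ ∈ W := by
    rw [ae_iff]
    exact hWc0
  have haeS : ∀ s ∈ S, ∀ᵐ δ ∂μ, g s δ ∈ S :=
    fun s hs => haeW.mono fun δ hδ => hgS s hs δ hδ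
  have haePiW : ∀ᵐ Δ ∂(Measure.pi fun _ : Fin k => μ), ∀ i, Δ i ∈ W := by
    rw [ae_iff]
    have hsub : {Δ : Fin k → (Fin n → ℝ) | ¬ ∀ i, Δ i ∈ W}
        ⊆ ⋃ i, {Δ : Fin k → (Fin n → ℝ) | Δ i ∈ Wᶜ} := by
      intro Δ h
      push_neg at h
      obtain ⟨i, hi⟩ := h
      exact Set.mem_iUnion.mpr ⟨i, hi⟩
    refine measure_mono_null hsub (measure_iUnion_null fun i => ?_)
    have hset : {Δ : Fin k → (Fin n → ℝ) | Δ i ∈ Wᶜ}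
        = Set.pi Set.univ (fun j => if j = i then Wᶜ else Set.univ) := by
      ext Δ
      simp only [Set.mem_setOf_eq, Set.mem_pi, Set.mem_univ, true_implies]
      constructor
      · intro h j
        by_cases hj : j = i
        · subst hj; simp [h]
        · simp [hj]
      · intro h
        have := h i
        simpa using this
    rw [hset, Measure.pi_pi]
    refine Finset.prod_eq_zero (Finset.mem_univ i) ?_
    simp [hWc0]
  have haePiS : ∀ s ∈ S, ∀ᵐ Δ ∂(Measure.pi fun _ : Fin k => μ), iterUpd g k s Δ ∈ S :=
    fun s hs => haePiW.mono fun Δ hΔ => iterUpd_mem g hgS k s hs Δ hΔ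
  -- transferred drift conditions
  have hB1' : ∀ s ∈ S, (∫⁻ δ, ENNReal.ofReal (B (g s δ)) ∂μ)
      ≤ ENNReal.ofReal (B s) + ENNReal.ofReal c := by
    intro s hs
    have hmg : Measurable fun δ => g s δ := hg.comp (measurable_const.prodMk measurable_id)
    have hmB : Measurable fun δ => B (g s δ) := hBmeas.comp hmg
    have hInt : Integrable (fun δ => B (g s δ)) μ :=
      Integrable.mono' (integrable_const C) hmB.aestronglyMeasurable
        (ae_of_all _ fun δ => by rw [Real.norm_eq_abs]; exact hC _)
    have hnn : 0 ≤ᵐ[μ] fun δ => B (g s δ) := (haeS s hs).mono fun δ h => hnonneg _ h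
    rw [← ofReal_integral_eq_lintegral_ofReal hInt hnn]
    calc ENNReal.ofReal (∫ δ, B (g s δ) ∂μ) ≤ ENNReal.ofReal (B s + c) :=
          ENNReal.ofReal_le_ofReal (by have := hcmart s hs; linarith)
      _ = _ := ENNReal.ofReal_add (hnonneg s hs) hc
  have hBk' : ∀ s ∈ S, (∫⁻ Δ, ENNReal.ofReal (B (iterUpd g k s Δ))
      ∂(Measure.pi fun _ : Fin k => μ)) ≤ ENNReal.ofReal (B s) := by
    intro s hs
    have hmg : Measurable fun Δ : Fin k → (Fin n → ℝ) => iterUpd g k s Δ :=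
      (measurable_iterUpd g hg k).comp (measurable_const.prodMk measurable_id)
    have hmB : Measurable fun Δ : Fin k → (Fin n → ℝ) => B (iterUpd g k s Δ) :=
      hBmeas.comp hmg
    have hInt : Integrable (fun Δ : Fin k → (Fin n → ℝ) => B (iterUpd g k s Δ))
        (Measure.pi fun _ : Fin k => μ) :=
      Integrable.mono' (integrable_const C) hmB.aestronglyMeasurable
        (ae_of_all _ fun Δ => by rw [Real.norm_eq_abs]; exact hC _)
    have hnn : 0 ≤ᵐ[(Measure.pi fun _ : Fin k => μ)]
        fun Δ : Fin k → (Fin n → ℝ) => B (iterUpd g k s Δ) :=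
      (haePiS s hs).mono fun Δ h => hnonneg _ h
    rw [← ofReal_integral_eq_lintegral_ofReal hInt hnn]
    exact ENNReal.ofReal_le_ofReal (by have := hkmart s hs; linarith)
  -- trajectory measurability
  have hmtraj : ∀ t, Measurable fun ω : ℕ → Fin n → ℝ => traj g s₀ ω t :=
    fun t => (measurable_traj g hg t).comp (measurable_const.prodMk measurable_id)
  -- the unsafe event and the residue events
  set U : Set (ℕ → Fin n → ℝ) := ⋃ t : ℕ, {ω | traj g s₀ ω t ∈ Su} with hUdef
  have hUm : MeasurableSet U :=
    MeasurableSet.iUnion fun t => (hmtraj t) hSu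
  have hSafe : {ω : ℕ → Fin n → ℝ | ∀ t : ℕ, traj g s₀ ω t ∉ Su} = Uᶜ := by
    ext ω
    simp [hUdef]
  -- per-residue bound
  have hKr : ∀ r, r < k → P {ω : ℕ → Fin n → ℝ | ∃ m : ℕ, 1 ≤ B (traj g s₀ ω (r + m*k))}
      ≤ ENNReal.ofReal (B s₀ + r * c) := by
    intro r hr
    set Frm : ℕ → Set (ℕ → Fin n → ℝ) :=
      fun M => {ω | ∃ m, m ≤ M ∧ 1 ≤ B (traj g s₀ ω (r + m*k))} with hFrm
    have hFmono : Monotone Frm := by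
      intro a b hab ω
      rintro ⟨m, hm, h1⟩
      exact ⟨m, hm.trans hab, h1⟩
    have hKrU : {ω : ℕ → Fin n → ℝ | ∃ m : ℕ, 1 ≤ B (traj g s₀ ω (r + m*k))}
        = ⋃ M, Frm M := by
      ext ω
      simp only [Set.mem_iUnion, hFrm, Set.mem_setOf_eq]
      constructor
      · rintro ⟨m, h⟩; exact ⟨m, m, le_rfl, h⟩
      · rintro ⟨M, m, _, h⟩; exact ⟨m, h⟩
    rw [hKrU, Directed.measure_iUnion (hFmono.directed_le)]
    refine iSup_le fun M => ?_
    set N := r + M * k with hN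
    set restr : (ℕ → Fin n → ℝ) → (Fin N → Fin n → ℝ) := fun ω i => ω i with hrestr
    have hrestr_m : Measurable restr :=
      measurable_pi_lambda _ fun i => measurable_pi_apply _
    have hmap : Measure.pi (fun _ : Fin N => μ) = Measure.map restr P := by
      refine Measure.pi_eq fun A hA => ?_
      rw [Measure.map_apply hrestr_m (MeasurableSet.univ_pi hA)]
      have hpre : restr ⁻¹' Set.pi Set.univ A = {ω | ∀ i : Fin N, ω (i : ℕ) ∈ A i} := by
        ext ω
        simp [Set.mem_pi, hrestr]
      rw [hpre, hP N A hA]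
    have hagree : ∀ (ω : ℕ → Fin n → ℝ) u, u ≤ N →
        traj g s₀ (extN N (restr ω)) u = traj g s₀ ω u := by
      intro ω u hu
      refine traj_congr g s₀ u fun i hi => ?_
      simp only [extN, hrestr, dif_pos (lt_of_lt_of_le hi hu)]
    have hFE : Frm M = restr ⁻¹' (Ev g B k r N 0 s₀) := by
      ext ω
      simp only [Set.mem_preimage, Ev, Set.mem_setOf_eq, hFrm]
      constructor
      · rintro ⟨m, hm, h1⟩
        refine ⟨r + m*k, ?_, ?_, ?_⟩
        · have : m * k ≤ M * k := Nat.mul_le_mul_right k hm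
          rw [hN]
          omega
        · simp [Nat.add_mul_mod_self_right, Nat.mod_eq_of_lt hr]
        · rw [hagree ω (r + m*k)
            (by have : m * k ≤ M * k := Nat.mul_le_mul_right k hm; rw [hN]; omega)]
          exact h1
      · rintro ⟨u, hu, hmod, h1⟩
        have hu' : u ≤ r + M * k := by rw [hN] at hu; exact hu
        have hzm : (0 + u) % k = u % k := by rw [Nat.zero_add]
        rw [hzm] at hmod
        have h2 : k * (u / k) + r = u := by
          conv_rhs => rw [← Nat.div_add_mod u k]
          rw [hmod]
        have hcomm : (u / k) * k = k * (u / k) := Nat.mul_comm _ _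
        refine ⟨u / k, ?_, ?_⟩
        · have hcomm2 : M * k = k * M := Nat.mul_comm _ _
          have h3 : k * (u / k) ≤ k * M := by omega
          exact Nat.le_of_mul_le_mul_left h3 hk0
        · have h4 : r + (u / k) * k = u := by omega
          rw [h4, hagree ω u hu] at *
          exact h1
    have hEvm : MeasurableSet (Ev g B k r N 0 s₀) := measurableSet_Ev hg hBmeas
    have hPier : P (Frm M) = Measure.pi (fun _ : Fin N => μ) (Ev g B k r N 0 s₀) := by
      rw [hFE, hmap, Measure.map_apply hrestr_m hEvm]
    rw [hPier]
    refine (Ev_measure_le hg hBmeas N 0 s₀).trans ?_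
    have hdrift := FF_drift hg hBmeas hk0 haeS haePiS hBk' hB1' r N 0 s₀ hs₀S
      (by simpa using Nat.mod_eq_of_lt hr)
      (fun i hi => by
        rw [Nat.zero_add, Nat.mod_eq_of_lt (lt_trans hi hr)]
        omega)
    refine hdrift.trans (le_of_eq ?_)
    rw [ENNReal.ofReal_add hB0 (by positivity), ENNReal.ofReal_mul (by positivity : (0:ℝ) ≤ (r:ℝ)),
      ENNReal.ofReal_natCast]
  -- union bound over residues
  have hUsub : U ⊆ ⋃ r ∈ Finset.range k,
      {ω : ℕ → Fin n → ℝ | ∃ m : ℕ, 1 ≤ B (traj g s₀ ω (r + m*k))} := by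
    intro ω hω
    rw [Set.mem_iUnion] at hω
    obtain ⟨t, ht⟩ := hω
    refine Set.mem_biUnion (Finset.mem_range.mpr (Nat.mod_lt t hk0)) ?_
    refine ⟨t / k, ?_⟩
    rw [Nat.mod_add_div']
    exact hunsafe _ ht
  have hPU : P U ≤ ENNReal.ofReal (∑ r ∈ Finset.range k, (B s₀ + r * c)) := by
    calc P U ≤ P (⋃ r ∈ Finset.range k,
          {ω : ℕ → Fin n → ℝ | ∃ m : ℕ, 1 ≤ B (traj g s₀ ω (r + m*k))}) :=
          measure_mono hUsub
      _ ≤ ∑ r ∈ Finset.range k,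
          P {ω : ℕ → Fin n → ℝ | ∃ m : ℕ, 1 ≤ B (traj g s₀ ω (r + m*k))} :=
          measure_biUnion_finset_le _ _
      _ ≤ ∑ r ∈ Finset.range k, ENNReal.ofReal (B s₀ + r * c) :=
          Finset.sum_le_sum fun r hr => hKr r (Finset.mem_range.mp hr)
      _ = ENNReal.ofReal (∑ r ∈ Finset.range k, (B s₀ + r * c)) :=
          (ENNReal.ofReal_sum_of_nonneg fun r _ => by positivity).symm
  set a : ℝ := ∑ r ∈ Finset.range k, (B s₀ + r * c) with ha
  have hsum : (∑ r ∈ Finset.range k, (r:ℝ)) * 2 = (k:ℝ) * ((k:ℝ) - 1) := by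
    have h := Finset.sum_range_id_mul_two k
    have h2 := congrArg (Nat.cast (R := ℝ)) h
    push_cast [Nat.cast_sub hk] at h2
    exact h2
  have ha_eq : a = k * B s₀ + ((k:ℝ) * ((k:ℝ) - 1) / 2) * c := by
    rw [ha, Finset.sum_add_distrib, Finset.sum_const, Finset.card_range, ← Finset.sum_mul]
    rw [nsmul_eq_mul]
    have : (∑ r ∈ Finset.range k, (r:ℝ)) = (k:ℝ) * ((k:ℝ) - 1) / 2 := by linarith
    rw [this]
  have ha0 : 0 ≤ a := by
    rw [ha]
    refine Finset.sum_nonneg fun r _ => by positivity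
  rw [hSafe, prob_compl_eq_one_sub hUm]
  have h1 : ((1 : ℝ≥0∞) - P U).toReal = 1 - (P U).toReal := by
    rw [ENNReal.toReal_sub_of_le prob_le_one ENNReal.one_ne_top]
    simp
  have h2 : (P U).toReal ≤ a := by
    have h3 := ENNReal.toReal_mono ENNReal.ofReal_ne_top hPU
    rwa [ENNReal.toReal_ofReal ha0] at h3
  rw [h1]
  nlinarith [h2, ha_eq]
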